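/- arXiv:2310.09110 — 3 statements merged into one kernel-verified Lean document; each statement's English description precedes it below -/
import Mathlib

section
/- For every r ≥ 1, one has I_r^0 = L(ℤ_p)·I_r: every g ∈ I_r^0 can be written as g = l·h with l ∈ GL_n(ℤ_p) block diagonal (for the given partition) and h ∈ I_r. -/
/-!
STATEMENT 3: For every r ≥ 1, one has I_r^0 = L(ℤ_p)·I_r: an element g of GL_n(ℤ_p) lies
in the P-Iwahori subgroup I_r^0 if and only if it can be written as g = l·h with
l ∈ GL_n(ℤ_p) block diagonal (for the given partition) and h ∈ I_r.
-/

open Matrix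

noncomputable section
namespace PIw

/-- Partial sums of the partition: `Dsum nn j = n_1 + ⋯ + n_j` (`nn` is 0-indexed). -/
def Dsum {t : ℕ} (nn : Fin t → ℕ) (j : ℕ) : ℕ :=
  ∑ i ∈ Finset.range j, if h : i < t then nn ⟨i, h⟩ else 0

/-- Index (0-indexed) of the block containing position `k`. -/
def blkOf {t : ℕ} (nn : Fin t → ℕ) (k : ℕ) : ℕ :=
  ((Finset.range t).filter fun j => Dsum nn (j + 1) ≤ k).card

/-- The block function on `Fin n`. -/
def bfun {t : ℕ} (nn : Fin t → ℕ) : Fin (Dsum nn t) → ℕ := fun k => blkOf nn (k : ℕ)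

/-- Block upper triangular (entries strictly below the diagonal blocks vanish). -/
def IsBlockUpper {t : ℕ} (nn : Fin t → ℕ) {R : Type*} [CommRing R]
    (M : Matrix (Fin (Dsum nn t)) (Fin (Dsum nn t)) R) : Prop :=
  M.BlockTriangular (bfun nn)

/-- Block diagonal: entries outside the diagonal blocks vanish. -/
def IsBlockDiag {t : ℕ} (nn : Fin t → ℕ) {R : Type*} [CommRing R]
    (M : Matrix (Fin (Dsum nn t)) (Fin (Dsum nn t)) R) : Prop :=
  ∀ k l, bfun nn k ≠ bfun nn l → M k l = 0

/-- Block upper triangular with identity diagonal blocks. -/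
def IsBlockUnipotent {t : ℕ} (nn : Fin t → ℕ) {R : Type*} [CommRing R]
    (M : Matrix (Fin (Dsum nn t)) (Fin (Dsum nn t)) R) : Prop :=
  IsBlockUpper nn M ∧
    ∀ k l, bfun nn k = bfun nn l → M k l = if k = l then 1 else 0

variable (p : ℕ) [Fact p.Prime]

/-- Entrywise reduction mod `p^r`. -/
def redMat (r : ℕ) {N : ℕ} (M : Matrix (Fin N) (Fin N) ℤ_[p]) :
    Matrix (Fin N) (Fin N) (ZMod (p ^ r)) :=
  M.map (PadicInt.toZModPow r)

/-- Membership in the `P`-Iwahori subgroup `I_r^0`. -/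
def memIw0 {t : ℕ} (nn : Fin t → ℕ) (r : ℕ) (g : GL (Fin (Dsum nn t)) ℤ_[p]) : Prop :=
  IsBlockUpper nn (redMat p r g.val)

/-- Membership in the pro-`p` `P`-Iwahori subgroup `I_r`. -/
def memIw {t : ℕ} (nn : Fin t → ℕ) (r : ℕ) (g : GL (Fin (Dsum nn t)) ℤ_[p]) : Prop :=
  IsBlockUnipotent nn (redMat p r g.val)


section Aux
open Finset

/-- Determinants of two block-triangular matrices agreeing on diagonal blocks coincide. -/
theorem det_eq_of_blockTriangular {N : ℕ} {R : Type*} [CommRing R] (b : Fin N → ℕ)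
    (M M' : Matrix (Fin N) (Fin N) R) (hM : M.BlockTriangular b) (hM' : M'.BlockTriangular b)
    (h : ∀ k j, b k = b j → M k j = M' k j) : M.det = M'.det := by
  rw [hM.det, hM'.det]
  refine Finset.prod_congr rfl fun a _ => ?_
  congr 1
  ext k j
  exact h k j (k.2.trans j.2.symm)

/-- The inverse of a block-diagonal matrix is block diagonal. -/
theorem inv_blockDiag {N : ℕ} {R : Type*} [CommRing R] (b : Fin N → ℕ)
    (M : Matrix (Fin N) (Fin N) R) (hd : IsUnit M.det)
    (hM : ∀ k j, b k ≠ b j → M k j = 0) : ∀ k j, b k ≠ b j → M⁻¹ k j = 0 := by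
  haveI := M.invertibleOfIsUnitDet hd
  have hu : M.BlockTriangular b := fun i j hij => hM i j hij.ne'
  have hl : Mᵀ.BlockTriangular b := fun i j hij => hM j i hij.ne
  have hui := Matrix.blockTriangular_inv_of_blockTriangular hu
  haveI : Invertible Mᵀ := M.invertibleTranspose
  have hli := Matrix.blockTriangular_inv_of_blockTriangular hl
  intro k j hkj
  rcases hkj.lt_or_gt with h | h
  · have := hli h
    rwa [← Matrix.transpose_nonsing_inv, Matrix.transpose_apply] at this
  · exact hui h

/-- A `p`-adic integer whose residue mod `p` is nonzero is a unit. -/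
theorem isUnit_of_toZMod_ne_zero {p : ℕ} [Fact p.Prime] {x : ℤ_[p]}
    (h : PadicInt.toZMod x ≠ 0) : IsUnit x := by
  by_contra hx
  exact h (by
    rw [← RingHom.mem_ker, PadicInt.ker_toZMod]
    exact IsLocalRing.mem_maximalIdeal x |>.mpr hx)

/-- If `x ≡ 0 mod p^r` with `r ≥ 1`, then `x ≡ 0 mod p`. -/
theorem toZMod_eq_zero_of_toZModPow {p : ℕ} [Fact p.Prime] {r : ℕ} (hr : 1 ≤ r) {x : ℤ_[p]}
    (h : PadicInt.toZModPow r x = 0) : PadicInt.toZMod x = 0 := by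
  rw [← RingHom.mem_ker, PadicInt.ker_toZModPow] at h
  rw [← RingHom.mem_ker, PadicInt.ker_toZMod, PadicInt.maximalIdeal_eq_span_p]
  refine Ideal.span_singleton_le_span_singleton.mpr (dvd_pow_self _ ?_) h
  omega

end Aux

/-- `I_r^0 = L(ℤ_p)·I_r`. -/
theorem iw0_eq_levi_mul_iw {t : ℕ} (nn : Fin t → ℕ) (hpos : ∀ j, 0 < nn j)
    (r : ℕ) (hr : 1 ≤ r) (g : GL (Fin (Dsum nn t)) ℤ_[p]) :
    memIw0 p nn r g ↔
      ∃ l h : GL (Fin (Dsum nn t)) ℤ_[p],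
        IsBlockDiag nn l.val ∧ memIw p nn r h ∧ g = l * h := by
  classical
  set b := bfun nn with hb
  constructor
  · intro hg
    -- the block-diagonal part of `g`
    set A : Matrix (Fin (Dsum nn t)) (Fin (Dsum nn t)) ℤ_[p] :=
      fun k j => if b k = b j then g.val k j else 0 with hA
    have hAdiag : ∀ k j, b k ≠ b j → A k j = 0 := fun k j h => if_neg h
    have hAblk : ∀ k j, b k = b j → A k j = g.val k j := fun k j h => if_pos h
    -- `g` is block triangular mod p
    have hgp : ∀ i j, b j < b i → PadicInt.toZMod (g.val i j) = 0 := by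
      intro i j hij
      exact toZMod_eq_zero_of_toZModPow hr (hg hij)
    have hgtri : (g.val.map (PadicInt.toZMod : ℤ_[p] →+* ZMod p)).BlockTriangular b :=
      fun i j hij => hgp i j hij
    have hAtri : (A.map (PadicInt.toZMod : ℤ_[p] →+* ZMod p)).BlockTriangular b := by
      intro i j hij
      simp [Matrix.map_apply, hAdiag i j hij.ne']
    -- `A` has unit determinant
    have hgu : IsUnit (g.val.det) := (Matrix.isUnit_iff_isUnit_det _).mp ⟨g, rfl⟩
    have hdetmap : (A.map (PadicInt.toZMod : ℤ_[p] →+* ZMod p)).det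
        = (g.val.map (PadicInt.toZMod : ℤ_[p] →+* ZMod p)).det := by
      refine det_eq_of_blockTriangular b _ _ hAtri hgtri fun k j h => ?_
      simp [Matrix.map_apply, hAblk k j h]
    have hAdet : IsUnit A.det := by
      apply isUnit_of_toZMod_ne_zero
      rw [RingHom.map_det, RingHom.mapMatrix_apply, hdetmap, ← RingHom.mapMatrix_apply, ← RingHom.map_det]
      exact (hgu.map (PadicInt.toZMod : ℤ_[p] →+* ZMod p)).ne_zero
    -- `A⁻¹` is block diagonal and `A⁻¹ * g` has identity diagonal blocks
    have hAinv : ∀ k j, b k ≠ b j → A⁻¹ k j = 0 := inv_blockDiag b A hAdet hAdiag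
    have hid : ∀ k j, b k = b j →
        (A⁻¹ * g.val) k j = if k = j then (1 : ℤ_[p]) else 0 := by
      intro k j hkj
      have h1 : (A⁻¹ * g.val) k j = (A⁻¹ * A) k j := by
        rw [Matrix.mul_apply, Matrix.mul_apply]
        refine Finset.sum_congr rfl fun m _ => ?_
        by_cases hm : b k = b m
        · rw [hAblk m j (hm.symm.trans hkj)]
        · rw [hAinv k m hm, zero_mul, zero_mul]
      rw [h1, Matrix.nonsing_inv_mul A hAdet, Matrix.one_apply]
    -- assemble
    set L : GL (Fin (Dsum nn t)) ℤ_[p] := Matrix.nonsingInvUnit A hAdet with hL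
    have hLval : L.val = A := rfl
    have hLinv : (L⁻¹).val = A⁻¹ := rfl
    refine ⟨L, L⁻¹ * g, ?_, ?_, ?_⟩
    · intro k j h
      rw [hLval]
      exact hAdiag k j h
    · have hval : (L⁻¹ * g).val = A⁻¹ * g.val := by rw [Units.val_mul, hLinv]
      have hred : redMat p r ((L⁻¹ * g).val)
          = A⁻¹.map (PadicInt.toZModPow r) * (g.val).map (PadicInt.toZModPow r) := by
        rw [hval, redMat, Matrix.map_mul]
      constructor
      · intro i j hij
        rw [hred, Matrix.mul_apply]
        refine Finset.sum_eq_zero fun m _ => ?_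
        by_cases hm : b i = b m
        · have : (g.val.map (PadicInt.toZModPow r)) m j = 0 := hg (hij.trans_eq hm)
          rw [this, mul_zero]
        · simp [Matrix.map_apply, hAinv i m hm]
      · intro k j hkj
        rw [hred, ← Matrix.map_mul, Matrix.map_apply, hid k j hkj]
        split <;> simp
    · exact (mul_inv_cancel_left L g).symm
  · rintro ⟨l, h, hl, hh, rfl⟩
    have hval : redMat p r ((l * h).val)
        = l.val.map (PadicInt.toZModPow r) * h.val.map (PadicInt.toZModPow r) := by
      rw [Units.val_mul, redMat, Matrix.map_mul]
    rw [memIw0, IsBlockUpper, hval]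
    refine Matrix.BlockTriangular.mul ?_ hh.1
    intro i j hij
    simp [Matrix.map_apply, hl i j hij.ne']


end PIw
end
end

section
/- For every r ≥ 1, every block boundary i = D(j) (1 ≤ j ≤ t), and every X ∈ I_r, there exists a unique pair (B', Y) consisting of an i×(n−i) matrix B' with all entries in {0, 1, …, p−1} and an element Y ∈ I_r, such that X = u(B')·(t_i Y t_i^{−1}) in GL_n(ℚ_p); in particular, t_i^{−1}·(u(B')^{−1} X)·t_i has all entries in ℤ_p and lies in I_r. -/
/-!
STATEMENT 4: For every r ≥ 1, every block boundary i = D(j) (1 ≤ j ≤ t), and every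
X ∈ I_r, there exists a unique pair (B', Y) consisting of an i×(n−i) matrix B' with all
entries in {0, 1, …, p−1} and an element Y ∈ I_r, such that X = u(B')·(t_i Y t_i^{−1})
in GL_n(ℚ_p); in particular, t_i^{−1}·(u(B')^{−1} X)·t_i has all entries in ℤ_p and lies
in I_r.
-/

open Matrix

noncomputable section
namespace PIw

variable (p : ℕ) [Fact p.Prime]

/-- Coefficient-wise inclusion `ℤ_p → ℚ_p` on matrices. -/
def toQ {N : ℕ} (M : Matrix (Fin N) (Fin N) ℤ_[p]) : Matrix (Fin N) (Fin N) ℚ_[p] :=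
  M.map (fun x => (x : ℚ_[p]))

/-- The matrix `t_i = diag(p·1_i, 1_{n-i})` in `GL_n(ℚ_p)`. -/
def tMat (N i : ℕ) : Matrix (Fin N) (Fin N) ℚ_[p] :=
  Matrix.diagonal fun k => if (k : ℕ) < i then (p : ℚ_[p]) else 1

/-- The matrix `t_i⁻¹ = diag(p⁻¹·1_i, 1_{n-i})` in `GL_n(ℚ_p)`. -/
def tInvMat (N i : ℕ) : Matrix (Fin N) (Fin N) ℚ_[p] :=
  Matrix.diagonal fun k => if (k : ℕ) < i then (p : ℚ_[p])⁻¹ else 1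

/-- The unipotent matrix `u(B) = (1_i, B; 0, 1_{n-i})`, where `B` is an `i × (n-i)`
matrix of natural numbers (viewed in `ℚ_p`). -/
def uMat (N i : ℕ) (B : Matrix (Fin i) (Fin (N - i)) ℕ) :
    Matrix (Fin N) (Fin N) ℚ_[p] := fun k l =>
  if h : (k : ℕ) < i ∧ i ≤ (l : ℕ) then
    (B ⟨(k : ℕ), h.1⟩ ⟨(l : ℕ) - i, Nat.sub_lt_sub_right h.2 l.isLt⟩ : ℚ_[p])
  else if k = l then 1 else 0

/-! ### Auxiliary lemmas -/

theorem Dsum_mono {t : ℕ} (nn : Fin t → ℕ) {a b : ℕ} (h : a ≤ b) :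
    Dsum nn a ≤ Dsum nn b :=
  Finset.sum_le_sum_of_subset (Finset.range_subset_range.mpr h)

theorem blkOf_mono {t : ℕ} (nn : Fin t → ℕ) {a b : ℕ} (h : a ≤ b) :
    blkOf nn a ≤ blkOf nn b :=
  Finset.card_le_card (Finset.monotone_filter_right _ fun _ _ hj => le_trans hj h)

theorem Dsum_le_iff_blk {t : ℕ} (nn : Fin t → ℕ) (j : Fin t) (k : ℕ) :
    Dsum nn ((j : ℕ) + 1) ≤ k ↔ (j : ℕ) < blkOf nn k := by
  constructor
  · intro h
    have hsub : Finset.range ((j : ℕ) + 1) ⊆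
        (Finset.range t).filter fun j' => Dsum nn (j' + 1) ≤ k := by
      intro j' hj'
      have hj'le : j' ≤ (j : ℕ) := Nat.lt_succ_iff.mp (Finset.mem_range.mp hj')
      refine Finset.mem_filter.mpr ⟨Finset.mem_range.mpr (lt_of_le_of_lt hj'le j.2), ?_⟩
      exact le_trans (Dsum_mono nn (Nat.succ_le_succ hj'le)) h
    simpa [blkOf] using Finset.card_le_card hsub
  · intro h
    by_contra hk
    push_neg at hk
    have hsub : ((Finset.range t).filter fun j' => Dsum nn (j' + 1) ≤ k) ⊆
        Finset.range (j : ℕ) := by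
      intro j' hj'
      rcases Finset.mem_filter.mp hj' with ⟨-, h2⟩
      refine Finset.mem_range.mpr ?_
      by_contra hge
      push_neg at hge
      exact absurd (le_trans (Dsum_mono nn (Nat.succ_le_succ hge)) h2) (not_le.mpr hk)
    have hcard : blkOf nn k ≤ (j : ℕ) := by
      simpa [blkOf, Finset.card_range] using Finset.card_le_card hsub
    exact absurd h (not_lt.mpr hcard)

theorem lt_Dsum_iff_blk {t : ℕ} (nn : Fin t → ℕ) (j : Fin t) (k : ℕ) :
    k < Dsum nn ((j : ℕ) + 1) ↔ blkOf nn k ≤ (j : ℕ) := by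
  rw [← not_le, Dsum_le_iff_blk, not_lt]

/-- The strictly upper-triangular part of `uMat`, over `ℚ_p`. -/
def eMat (N i : ℕ) (B : Matrix (Fin i) (Fin (N - i)) ℕ) :
    Matrix (Fin N) (Fin N) ℚ_[p] := fun k l =>
  if h : (k : ℕ) < i ∧ i ≤ (l : ℕ) then
    (B ⟨(k : ℕ), h.1⟩ ⟨(l : ℕ) - i, Nat.sub_lt_sub_right h.2 l.isLt⟩ : ℚ_[p])
  else 0

/-- The strictly upper-triangular part of `uMat`, over `ℤ_p`. -/
def eZMat (N i : ℕ) (B : Matrix (Fin i) (Fin (N - i)) ℕ) :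
    Matrix (Fin N) (Fin N) ℤ_[p] := fun k l =>
  if h : (k : ℕ) < i ∧ i ≤ (l : ℕ) then
    (B ⟨(k : ℕ), h.1⟩ ⟨(l : ℕ) - i, Nat.sub_lt_sub_right h.2 l.isLt⟩ : ℤ_[p])
  else 0

theorem eMat_eq_coe (N i : ℕ) (B : Matrix (Fin i) (Fin (N - i)) ℕ) (k l : Fin N) :
    eMat p N i B k l = ((eZMat p N i B k l : ℤ_[p]) : ℚ_[p]) := by
  unfold eMat eZMat
  split_ifs with h
  · rw [PadicInt.coe_natCast]
  · simp

theorem eMat_apply_ne (N i : ℕ) (B : Matrix (Fin i) (Fin (N - i)) ℕ) {k l : Fin N}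
    (h : ¬((k : ℕ) < i ∧ i ≤ (l : ℕ))) : eMat p N i B k l = 0 := dif_neg h

theorem eZMat_apply_ne (N i : ℕ) (B : Matrix (Fin i) (Fin (N - i)) ℕ) {k l : Fin N}
    (h : ¬((k : ℕ) < i ∧ i ≤ (l : ℕ))) : eZMat p N i B k l = 0 := dif_neg h

theorem uMat_eq (N i : ℕ) (B : Matrix (Fin i) (Fin (N - i)) ℕ) :
    uMat p N i B = 1 + eMat p N i B := by
  funext k l
  unfold uMat eMat
  by_cases h : (k : ℕ) < i ∧ i ≤ (l : ℕ)
  · have hne : k ≠ l := by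
      intro he
      rw [he] at h
      omega
    erw [dif_pos h, Matrix.add_apply, Matrix.one_apply_ne hne, dif_pos h, zero_add]
  · erw [dif_neg h, Matrix.add_apply, dif_neg h, add_zero, Matrix.one_apply]

theorem eMat_mul_eMat (N i : ℕ) (B B₂ : Matrix (Fin i) (Fin (N - i)) ℕ) :
    eMat p N i B * eMat p N i B₂ = 0 := by
  funext k l
  rw [Matrix.mul_apply, Matrix.zero_apply]
  apply Finset.sum_eq_zero
  intro m _
  by_cases h : (k : ℕ) < i ∧ i ≤ (m : ℕ)
  · rw [eMat_apply_ne p N i B₂ (by omega), mul_zero]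
  · rw [eMat_apply_ne p N i B h, zero_mul]

theorem uMat_mul_uInv (N i : ℕ) (B : Matrix (Fin i) (Fin (N - i)) ℕ) :
    uMat p N i B * (1 - eMat p N i B) = 1 := by
  rw [uMat_eq]
  have h := eMat_mul_eMat p N i B B
  have h2 : (1 + eMat p N i B) * (1 - eMat p N i B)
      = 1 - eMat p N i B * eMat p N i B := by noncomm_ring
  rw [h2, h, sub_zero]

theorem uInv_mul_uMat (N i : ℕ) (B : Matrix (Fin i) (Fin (N - i)) ℕ) :
    (1 - eMat p N i B) * uMat p N i B = 1 := by
  rw [uMat_eq]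
  have h := eMat_mul_eMat p N i B B
  have h2 : (1 - eMat p N i B) * (1 + eMat p N i B)
      = 1 - eMat p N i B * eMat p N i B := by noncomm_ring
  rw [h2, h, sub_zero]

theorem uMat_det (N i : ℕ) (B : Matrix (Fin i) (Fin (N - i)) ℕ) :
    (uMat p N i B).det = 1 := by
  have htri : (uMat p N i B).BlockTriangular id := by
    intro k l h
    have hlk : (l : ℕ) < (k : ℕ) := h
    unfold uMat
    rw [dif_neg (by omega), if_neg (by intro he; rw [he] at hlk; omega)]
  rw [Matrix.det_of_upperTriangular htri]
  apply Finset.prod_eq_one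
  intro k _
  unfold uMat
  rw [dif_neg (by omega), if_pos rfl]

theorem tMat_mul_tInv (N i : ℕ) : tMat p N i * tInvMat p N i = 1 := by
  have hp0 : (p : ℚ_[p]) ≠ 0 := Nat.cast_ne_zero.mpr (Fact.out : p.Prime).pos.ne'
  unfold tMat tInvMat
  rw [Matrix.diagonal_mul_diagonal, ← Matrix.diagonal_one]
  apply congrArg
  funext k
  split_ifs with h
  · exact mul_inv_cancel₀ hp0
  · exact mul_one 1

theorem tInv_mul_tMat (N i : ℕ) : tInvMat p N i * tMat p N i = 1 := by
  have hp0 : (p : ℚ_[p]) ≠ 0 := Nat.cast_ne_zero.mpr (Fact.out : p.Prime).pos.ne'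
  unfold tMat tInvMat
  rw [Matrix.diagonal_mul_diagonal, ← Matrix.diagonal_one]
  apply congrArg
  funext k
  split_ifs with h
  · exact inv_mul_cancel₀ hp0
  · exact mul_one 1

theorem tat_apply (N i : ℕ) (A : Matrix (Fin N) (Fin N) ℚ_[p]) (k l : Fin N) :
    (tMat p N i * A * tInvMat p N i) k l =
      (if (k : ℕ) < i then (p : ℚ_[p]) else 1) * A k l *
        (if (l : ℕ) < i then (p : ℚ_[p])⁻¹ else 1) := by
  unfold tMat tInvMat
  rw [Matrix.mul_diagonal, Matrix.diagonal_mul]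

/-- Entry formula for `u(B) * (T A T⁻¹)`. -/
theorem mul_entry (N i : ℕ) (B : Matrix (Fin i) (Fin (N - i)) ℕ)
    (A : Matrix (Fin N) (Fin N) ℚ_[p]) (k l : Fin N) :
    (uMat p N i B * (tMat p N i * A * tInvMat p N i)) k l =
      ((if (k : ℕ) < i then (p : ℚ_[p]) else 1) * A k l +
        ∑ m, eMat p N i B k m * A m l) * (if (l : ℕ) < i then (p : ℚ_[p])⁻¹ else 1) := by
  rw [uMat_eq, add_mul, one_mul, Matrix.add_apply, tat_apply, Matrix.mul_apply]
  have hsum : ∀ m : Fin N, eMat p N i B k m * (tMat p N i * A * tInvMat p N i) m l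
      = eMat p N i B k m * A m l * (if (l : ℕ) < i then (p : ℚ_[p])⁻¹ else 1) := by
    intro m
    rw [tat_apply]
    by_cases h : (k : ℕ) < i ∧ i ≤ (m : ℕ)
    · rw [if_neg (by omega)]
      ring
    · rw [eMat_apply_ne p N i B h, zero_mul, zero_mul, zero_mul]
  rw [Finset.sum_congr rfl fun m _ => hsum m, ← Finset.sum_mul]
  ring

theorem padic_coe_sum {M : ℕ} (f : Fin M → ℤ_[p]) :
    ((∑ m, f m : ℤ_[p]) : ℚ_[p]) = ∑ m, ((f m : ℤ_[p]) : ℚ_[p]) := by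
  rw [show ((∑ m, f m : ℤ_[p]) : ℚ_[p]) = PadicInt.Coe.ringHom (∑ m, f m) from rfl,
    _root_.map_sum]
  rfl

set_option maxHeartbeats 2000000 in
/-- Unique decomposition `X = u(B')·(t_i Y t_i⁻¹)` with `B'` having
entries in `{0, …, p−1}` and `Y ∈ I_r`; here `i = D(j)` is a block boundary. -/
theorem iwahori_coset_decomposition {t : ℕ} (nn : Fin t → ℕ) (hpos : ∀ j, 0 < nn j)
    (r : ℕ) (hr : 1 ≤ r) (j : Fin t)
    (X : GL (Fin (Dsum nn t)) ℤ_[p]) (hX : memIw p nn r X) :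
    ∃! BY : Matrix (Fin (Dsum nn ((j : ℕ) + 1)))
        (Fin (Dsum nn t - Dsum nn ((j : ℕ) + 1))) ℕ × GL (Fin (Dsum nn t)) ℤ_[p],
      (∀ k l, BY.1 k l < p) ∧ memIw p nn r BY.2 ∧
        toQ p X.val =
          uMat p (Dsum nn t) (Dsum nn ((j : ℕ) + 1)) BY.1 *
            (tMat p (Dsum nn t) (Dsum nn ((j : ℕ) + 1)) * toQ p BY.2.val *
              tInvMat p (Dsum nn t) (Dsum nn ((j : ℕ) + 1))) := by
  classical
  have hprime : p.Prime := Fact.out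
  have hii : (Dsum nn ((j : ℕ) + 1)) ≤ (Dsum nn t) := Dsum_mono nn (Nat.succ_le_of_lt j.2)
  have hp0 : (p : ℚ_[p]) ≠ 0 := Nat.cast_ne_zero.mpr hprime.pos.ne'
  haveI : NeZero (p ^ 1) := ⟨pow_ne_zero 1 hprime.pos.ne'⟩
  -- the reduction mod p of X
  set M1 : Matrix (Fin (Dsum nn t)) (Fin (Dsum nn t)) (ZMod (p ^ 1)) :=
    (X.val).map (PadicInt.toZModPow 1) with hM1
  have hcast : ∀ z : ℤ_[p], PadicInt.toZModPow 1 z =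
      ZMod.castHom (pow_dvd_pow p hr) (ZMod (p ^ 1)) (PadicInt.toZModPow r z) :=
    fun z => (RingHom.congr_fun (PadicInt.zmod_cast_comp_toZModPow 1 r hr) z).symm
  -- block facts
  have hblkle : ∀ k : Fin (Dsum nn t), ((k : ℕ) < (Dsum nn ((j : ℕ) + 1)) ↔ bfun nn k ≤ (j : ℕ)) :=
    fun k => lt_Dsum_iff_blk nn j k
  have hblkge : ∀ k : Fin (Dsum nn t), ((Dsum nn ((j : ℕ) + 1)) ≤ (k : ℕ) ↔ (j : ℕ) < bfun nn k) :=
    fun k => Dsum_le_iff_blk nn j k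
  -- X mod p^r facts
  have hXtri : ∀ k l : Fin (Dsum nn t), bfun nn l < bfun nn k →
      PadicInt.toZModPow r (X.val k l) = 0 := fun k l h => hX.1 h
  have hXdiag : ∀ k l : Fin (Dsum nn t), bfun nn k = bfun nn l →
      PadicInt.toZModPow r (X.val k l) = (if k = l then 1 else 0) := fun k l h => hX.2 k l h
  -- M1 is upper triangular with unit diagonal
  have hM1tri : ∀ x y : Fin (Dsum nn t), (y : ℕ) < (x : ℕ) → M1 x y = 0 := by
    intro x y hxy
    have hmono : bfun nn y ≤ bfun nn x := blkOf_mono nn (le_of_lt hxy)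
    show PadicInt.toZModPow 1 (X.val x y) = 0
    rw [hcast]
    rcases lt_or_eq_of_le hmono with hlt | heq
    · rw [hXtri x y hlt, _root_.map_zero]
    · rw [hXdiag x y heq.symm, if_neg (by intro he; rw [he] at hxy; omega), _root_.map_zero]
  have hM1diag : ∀ x : Fin (Dsum nn t), M1 x x = 1 := by
    intro x
    show PadicInt.toZModPow 1 (X.val x x) = 1
    rw [hcast, hXdiag x x rfl, if_pos rfl]
    exact _root_.map_one _
  -- the bottom-right block of M1
  set N : Matrix {m : Fin (Dsum nn t) // (Dsum nn ((j : ℕ) + 1)) ≤ (m : ℕ)} {m : Fin (Dsum nn t) // (Dsum nn ((j : ℕ) + 1)) ≤ (m : ℕ)} (ZMod (p ^ 1)) :=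
    (fun a b => M1 a.1 b.1) with hN
  have hNdet : N.det = 1 := by
    have htri : N.BlockTriangular id := by
      intro a b hab
      exact hM1tri a.1 b.1 hab
    rw [Matrix.det_of_upperTriangular htri]
    exact Finset.prod_eq_one fun a _ => hM1diag a.1
  have hNunit : IsUnit N.det := hNdet ▸ isUnit_one
  -- the mod-p matrix B0 solving  B0 * N = (top-right block of M1)
  set B0 : Fin (Dsum nn t) → {m : Fin (Dsum nn t) // (Dsum nn ((j : ℕ) + 1)) ≤ (m : ℕ)} → ZMod (p ^ 1) :=
    (fun k => Matrix.vecMul (fun b => M1 k b.1) N⁻¹) with hB0def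
  have hB0 : ∀ k : Fin (Dsum nn t), Matrix.vecMul (B0 k) N = fun b => M1 k b.1 := by
    intro k
    show Matrix.vecMul (Matrix.vecMul (fun b => M1 k b.1) N⁻¹) N = _
    rw [Matrix.vecMul_vecMul, Matrix.nonsing_inv_mul N hNunit, Matrix.vecMul_one]
  -- the lift B' of B0 with entries in {0, ..., p-1}
  set B' : Matrix (Fin (Dsum nn ((j : ℕ) + 1))) (Fin ((Dsum nn t) - (Dsum nn ((j : ℕ) + 1)))) ℕ :=
    (fun a b => (B0 ⟨(a : ℕ), lt_of_lt_of_le a.2 hii⟩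
      ⟨⟨(Dsum nn ((j : ℕ) + 1)) + (b : ℕ), by omega⟩, by simp⟩).val) with hB'def
  have hB'lt : ∀ (a : Fin (Dsum nn ((j : ℕ) + 1))) (b : Fin ((Dsum nn t) - (Dsum nn ((j : ℕ) + 1)))), B' a b < p := by
    intro a b
    have := ZMod.val_lt (B0 ⟨(a : ℕ), lt_of_lt_of_le a.2 hii⟩
      ⟨⟨(Dsum nn ((j : ℕ) + 1)) + (b : ℕ), by omega⟩, by simp⟩)
    exact lt_of_lt_of_le this (le_of_eq (pow_one p))
  -- the value of B' recovered mod p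
  have hB'cast : ∀ (k : Fin (Dsum nn t)) (hk : (k : ℕ) < (Dsum nn ((j : ℕ) + 1))) (b : {m : Fin (Dsum nn t) // (Dsum nn ((j : ℕ) + 1)) ≤ (m : ℕ)}),
      ((B' ⟨(k : ℕ), hk⟩ ⟨(b.1 : ℕ) - (Dsum nn ((j : ℕ) + 1)), Nat.sub_lt_sub_right b.2 b.1.isLt⟩ : ℕ) :
        ZMod (p ^ 1)) = B0 k b := by
    intro k hk b
    rw [hB'def]
    have h1 : (⟨(k : ℕ), lt_of_lt_of_le hk hii⟩ : Fin (Dsum nn t)) = k := rfl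
    have h2 : (⟨⟨(Dsum nn ((j : ℕ) + 1)) + ((b.1 : ℕ) - (Dsum nn ((j : ℕ) + 1))), by omega⟩, by simp⟩ :
        {m : Fin (Dsum nn t) // (Dsum nn ((j : ℕ) + 1)) ≤ (m : ℕ)}) = b := by
      apply Subtype.ext
      apply Fin.ext
      simp only []
      omega
    simp only [h1, h2]
    exact ZMod.natCast_rightInverse (B0 k b)
  -- ℤ_p and ℚ_p objects
  set Ez : Matrix (Fin (Dsum nn t)) (Fin (Dsum nn t)) ℤ_[p] := eZMat p (Dsum nn t) (Dsum nn ((j : ℕ) + 1)) B' with hEzdef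
  set Zz : Matrix (Fin (Dsum nn t)) (Fin (Dsum nn t)) ℤ_[p] := X.val - Ez * X.val with hZzdef
  set Em : Matrix (Fin (Dsum nn t)) (Fin (Dsum nn t)) ℚ_[p] := eMat p (Dsum nn t) (Dsum nn ((j : ℕ) + 1)) B' with hEmdef
  set T : Matrix (Fin (Dsum nn t)) (Fin (Dsum nn t)) ℚ_[p] := tMat p (Dsum nn t) (Dsum nn ((j : ℕ) + 1)) with hTdef
  set T' : Matrix (Fin (Dsum nn t)) (Fin (Dsum nn t)) ℚ_[p] := tInvMat p (Dsum nn t) (Dsum nn ((j : ℕ) + 1)) with hT'def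
  set Xq : Matrix (Fin (Dsum nn t)) (Fin (Dsum nn t)) ℚ_[p] := toQ p X.val with hXqdef
  set U : Matrix (Fin (Dsum nn t)) (Fin (Dsum nn t)) ℚ_[p] := uMat p (Dsum nn t) (Dsum nn ((j : ℕ) + 1)) B' with hUdef
  -- reduction of Ez entries
  have hEzred : ∀ (k : Fin (Dsum nn t)) (hk : (k : ℕ) < (Dsum nn ((j : ℕ) + 1))) (b : {m : Fin (Dsum nn t) // (Dsum nn ((j : ℕ) + 1)) ≤ (m : ℕ)}),
      PadicInt.toZModPow 1 (Ez k b.1) = B0 k b := by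
    intro k hk b
    rw [hEzdef]
    unfold eZMat
    rw [dif_pos ⟨hk, b.2⟩, _root_.map_natCast]
    exact hB'cast k hk b
  have hEzzero : ∀ k m : Fin (Dsum nn t), ¬((k : ℕ) < (Dsum nn ((j : ℕ) + 1)) ∧ (Dsum nn ((j : ℕ) + 1)) ≤ (m : ℕ)) → Ez k m = 0 :=
    fun k m h => eZMat_apply_ne p (Dsum nn t) (Dsum nn ((j : ℕ) + 1)) B' h
  -- the sum over the bottom-right index set
  have hsubty : ∀ (f : Fin (Dsum nn t) → ZMod (p ^ 1)),
      (∀ m : Fin (Dsum nn t), ¬ (Dsum nn ((j : ℕ) + 1)) ≤ (m : ℕ) → f m = 0) →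
      ∑ m, f m = ∑ b : {m : Fin (Dsum nn t) // (Dsum nn ((j : ℕ) + 1)) ≤ (m : ℕ)}, f b.1 := by
    intro f hf
    rw [← Finset.sum_subtype (Finset.univ.filter fun m : Fin (Dsum nn t) => (Dsum nn ((j : ℕ) + 1)) ≤ (m : ℕ))
      (fun m => by simp) f]
    rw [Finset.sum_filter_of_ne]
    intro m _ hm
    by_contra hc
    exact hm (hf m hc)
  -- entry formula for Zz
  have hZzent : ∀ k l : Fin (Dsum nn t), Zz k l = X.val k l - ∑ m, Ez k m * X.val m l := by
    intro k l
    rw [hZzdef]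
    rw [Matrix.sub_apply, Matrix.mul_apply]
  -- the key mod-p identity
  have hkey : ∀ (k l : Fin (Dsum nn t)), (k : ℕ) < (Dsum nn ((j : ℕ) + 1)) → (Dsum nn ((j : ℕ) + 1)) ≤ (l : ℕ) →
      PadicInt.toZModPow 1 (Zz k l) = 0 := by
    intro k l hk hl
    rw [hZzent, _root_.map_sub, _root_.map_sum]
    have hterm : ∀ m : Fin (Dsum nn t), PadicInt.toZModPow 1 (Ez k m * X.val m l) =
        PadicInt.toZModPow 1 (Ez k m) * M1 m l := by
      intro m
      exact _root_.map_mul _ _ _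
    rw [Finset.sum_congr rfl fun m _ => hterm m]
    rw [hsubty (fun m => PadicInt.toZModPow 1 (Ez k m) * M1 m l) (fun m hm => by
      show PadicInt.toZModPow 1 (Ez k m) * M1 m l = 0
      rw [hEzzero k m (by omega), _root_.map_zero, zero_mul])]
    have : ∀ b : {m : Fin (Dsum nn t) // (Dsum nn ((j : ℕ) + 1)) ≤ (m : ℕ)},
        PadicInt.toZModPow 1 (Ez k b.1) * M1 b.1 l = B0 k b * N b ⟨l, hl⟩ := by
      intro b
      rw [hEzred k hk b]
    rw [Finset.sum_congr rfl fun b _ => this b]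
    have hvm : ∑ b : {m : Fin (Dsum nn t) // (Dsum nn ((j : ℕ) + 1)) ≤ (m : ℕ)}, B0 k b * N b ⟨l, hl⟩ =
        Matrix.vecMul (B0 k) N ⟨l, hl⟩ := by
      rw [Matrix.vecMul]
      rfl
    rw [hvm, hB0 k]
    exact sub_self (M1 k l)
  -- Em is the coercion of Ez
  have hEmcoe : ∀ k l : Fin (Dsum nn t), Em k l = ((Ez k l : ℤ_[p]) : ℚ_[p]) :=
    fun k l => eMat_eq_coe p (Dsum nn t) (Dsum nn ((j : ℕ) + 1)) B' k l
  -- Wq = (1 - Em) * Xq is the coercion of Zz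
  set Wq : Matrix (Fin (Dsum nn t)) (Fin (Dsum nn t)) ℚ_[p] := (1 - Em) * Xq with hWqdef
  have hWq : ∀ k l : Fin (Dsum nn t), Wq k l = ((Zz k l : ℤ_[p]) : ℚ_[p]) := by
    intro k l
    rw [hWqdef, sub_mul, one_mul, Matrix.sub_apply, Matrix.mul_apply, hZzent,
      PadicInt.coe_sub]
    congr 1
    calc ∑ m, Em k m * Xq m l
        = ∑ m, ((Ez k m * X.val m l : ℤ_[p]) : ℚ_[p]) := by
          apply Finset.sum_congr rfl
          intro m _
          rw [hEmcoe]
          rfl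
      _ = ((∑ m, Ez k m * X.val m l : ℤ_[p]) : ℚ_[p]) :=
          (padic_coe_sum p fun m => Ez k m * X.val m l).symm
  -- the candidate Y over ℚ_p
  set Yq : Matrix (Fin (Dsum nn t)) (Fin (Dsum nn t)) ℚ_[p] := T' * Wq * T with hYqdef
  have hYqent : ∀ k l : Fin (Dsum nn t), Yq k l =
      (if (k : ℕ) < (Dsum nn ((j : ℕ) + 1)) then (p : ℚ_[p])⁻¹ else 1) * Wq k l *
        (if (l : ℕ) < (Dsum nn ((j : ℕ) + 1)) then (p : ℚ_[p]) else 1) := by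
    intro k l
    rw [hYqdef, hT'def, hTdef]
    unfold tMat tInvMat
    rw [Matrix.mul_diagonal, Matrix.diagonal_mul]
  -- norm bounds
  have hZnorm : ∀ k l : Fin (Dsum nn t), ‖((Zz k l : ℤ_[p]) : ℚ_[p])‖ ≤ 1 := fun k l => (Zz k l).2
  have hnormp : ‖(p : ℚ_[p])‖ ≤ 1 := le_of_lt Padic.norm_p_lt_one
  have hnorm : ∀ k l : Fin (Dsum nn t), ‖Yq k l‖ ≤ 1 := by
    intro k l
    rw [hYqent, hWq]
    by_cases hk : (k : ℕ) < (Dsum nn ((j : ℕ) + 1)) <;> by_cases hl : (l : ℕ) < (Dsum nn ((j : ℕ) + 1))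
    · rw [if_pos hk, if_pos hl]
      have : (p : ℚ_[p])⁻¹ * ((Zz k l : ℤ_[p]) : ℚ_[p]) * (p : ℚ_[p]) =
          ((Zz k l : ℤ_[p]) : ℚ_[p]) := by
        field_simp
      rw [this]
      exact hZnorm k l
    · rw [if_pos hk, if_neg hl, mul_one]
      have hmem : Zz k l ∈ Ideal.span {(p : ℤ_[p]) ^ 1} := by
        rw [← PadicInt.ker_toZModPow 1]
        exact hkey k l hk (not_lt.mp hl)
      have hZle : ‖Zz k l‖ ≤ (p : ℝ) ^ (-(1 : ℕ) : ℤ) :=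
        (PadicInt.norm_le_pow_iff_mem_span_pow (Zz k l) 1).mpr hmem
      have hZle' : ‖((Zz k l : ℤ_[p]) : ℚ_[p])‖ ≤ (p : ℝ)⁻¹ := by
        rw [← PadicInt.norm_def]
        simpa using hZle
      rw [norm_mul, norm_inv, Padic.norm_p, inv_inv]
      calc (p : ℝ) * ‖((Zz k l : ℤ_[p]) : ℚ_[p])‖ ≤ (p : ℝ) * (p : ℝ)⁻¹ := by
            apply mul_le_mul_of_nonneg_left hZle' (by positivity)
        _ = 1 := mul_inv_cancel₀ (by exact_mod_cast hprime.pos.ne')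
    · rw [if_neg hk, if_pos hl, one_mul, norm_mul]
      calc ‖((Zz k l : ℤ_[p]) : ℚ_[p])‖ * ‖(p : ℚ_[p])‖ ≤ 1 * 1 :=
            mul_le_mul (hZnorm k l) hnormp (norm_nonneg _) zero_le_one
        _ = 1 := one_mul 1
    · rw [if_neg hk, if_neg hl, one_mul, mul_one]
      exact hZnorm k l
  -- the integral matrix Yz
  set Yz : Matrix (Fin (Dsum nn t)) (Fin (Dsum nn t)) ℤ_[p] := (fun k l => ⟨Yq k l, hnorm k l⟩) with hYzdef
  have htoQYz : toQ p Yz = Yq := rfl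
  -- entrywise identities for Yz
  have hYz_a : ∀ k l : Fin (Dsum nn t), (k : ℕ) < (Dsum nn ((j : ℕ) + 1)) → (l : ℕ) < (Dsum nn ((j : ℕ) + 1)) → Yz k l = Zz k l := by
    intro k l hk hl
    apply Subtype.ext
    show Yq k l = ((Zz k l : ℤ_[p]) : ℚ_[p])
    rw [hYqent, hWq, if_pos hk, if_pos hl]
    field_simp
  have hZzX : ∀ k l : Fin (Dsum nn t), (Dsum nn ((j : ℕ) + 1)) ≤ (k : ℕ) → Zz k l = X.val k l := by
    intro k l hk
    rw [hZzent]
    have : ∀ m : Fin (Dsum nn t), Ez k m * X.val m l = 0 := fun m => by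
      rw [hEzzero k m (by omega), zero_mul]
    rw [Finset.sum_congr rfl fun m _ => this m, Finset.sum_const_zero, sub_zero]
  have hYz_b : ∀ k l : Fin (Dsum nn t), (Dsum nn ((j : ℕ) + 1)) ≤ (k : ℕ) → (l : ℕ) < (Dsum nn ((j : ℕ) + 1)) →
      Yz k l = X.val k l * (p : ℤ_[p]) := by
    intro k l hk hl
    apply Subtype.ext
    show Yq k l = ((X.val k l * (p : ℤ_[p]) : ℤ_[p]) : ℚ_[p])
    rw [hYqent, hWq, hZzX k l hk, if_neg (by omega), if_pos hl, one_mul,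
      PadicInt.coe_mul, PadicInt.coe_natCast]
  have hYz_c : ∀ k l : Fin (Dsum nn t), (Dsum nn ((j : ℕ) + 1)) ≤ (k : ℕ) → (Dsum nn ((j : ℕ) + 1)) ≤ (l : ℕ) → Yz k l = X.val k l := by
    intro k l hk hl
    apply Subtype.ext
    show Yq k l = ((X.val k l : ℤ_[p]) : ℚ_[p])
    rw [hYqent, hWq, hZzX k l hk, if_neg (by omega), if_neg (by omega), one_mul, mul_one]
  -- reduction mod p^r of Zz agrees with X on columns l < (Dsum nn ((j : ℕ) + 1))
  have hZzr : ∀ k l : Fin (Dsum nn t), (l : ℕ) < (Dsum nn ((j : ℕ) + 1)) →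
      PadicInt.toZModPow r (Zz k l) = PadicInt.toZModPow r (X.val k l) := by
    intro k l hl
    rw [hZzent, _root_.map_sub]
    have hterm : ∀ m : Fin (Dsum nn t), PadicInt.toZModPow r (Ez k m * X.val m l) = 0 := by
      intro m
      by_cases hm : (k : ℕ) < (Dsum nn ((j : ℕ) + 1)) ∧ (Dsum nn ((j : ℕ) + 1)) ≤ (m : ℕ)
      · rw [_root_.map_mul]
        have hbl : bfun nn l < bfun nn m := by
          have h1 := (hblkle l).mp hl
          have h2 := (hblkge m).mp hm.2
          omega
        rw [hXtri m l hbl, mul_zero]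
      · rw [hEzzero k m hm, zero_mul, _root_.map_zero]
    rw [_root_.map_sum, Finset.sum_congr rfl fun m _ => hterm m, Finset.sum_const_zero, sub_zero]
  -- determinant of Yz is a unit
  have hUinv : U * (1 - Em) = 1 := uMat_mul_uInv p (Dsum nn t) (Dsum nn ((j : ℕ) + 1)) B'
  have hUinv' : (1 - Em) * U = 1 := uInv_mul_uMat p (Dsum nn t) (Dsum nn ((j : ℕ) + 1)) B'
  have hUdet : U.det = 1 := uMat_det p (Dsum nn t) (Dsum nn ((j : ℕ) + 1)) B'
  have hEmdet : (1 - Em).det = 1 := by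
    have := congrArg Matrix.det hUinv'
    rwa [Matrix.det_mul, hUdet, mul_one, Matrix.det_one] at this
  have hT'T : T' * T = 1 := tInv_mul_tMat p (Dsum nn t) (Dsum nn ((j : ℕ) + 1))
  have hTT' : T * T' = 1 := tMat_mul_tInv p (Dsum nn t) (Dsum nn ((j : ℕ) + 1))
  have hYqdet : Yq.det = Xq.det := by
    have h1 : Yq.det = (T' * T).det * ((1 - Em).det * Xq.det) := by
      rw [hYqdef, hWqdef, Matrix.det_mul, Matrix.det_mul, Matrix.det_mul, Matrix.det_mul]
      ring
    rw [h1, hT'T, Matrix.det_one, hEmdet, one_mul, one_mul]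
  have hcoedet : ∀ M : Matrix (Fin (Dsum nn t)) (Fin (Dsum nn t)) ℤ_[p],
      ((M.det : ℤ_[p]) : ℚ_[p]) = (toQ p M).det := by
    intro M
    exact RingHom.map_det (PadicInt.Coe.ringHom (p := p)) M
  have hXdetu : IsUnit X.val.det := (Matrix.isUnit_iff_isUnit_det X.val).mp (Units.isUnit X)
  have hYzdet : IsUnit Yz.det := by
    rw [PadicInt.isUnit_iff]
    rw [PadicInt.norm_def, hcoedet Yz, htoQYz, hYqdet, hXqdef, ← hcoedet X.val,
      ← PadicInt.norm_def]
    exact PadicInt.isUnit_iff.mp hXdetu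
  -- Y as an element of GL
  set Yu : GL (Fin (Dsum nn t)) ℤ_[p] := ((Matrix.isUnit_iff_isUnit_det Yz).mpr hYzdet).unit with hYudef
  have hYu : Yu.val = Yz := IsUnit.unit_spec _
  -- Yu lies in I_r
  have hYumem : memIw p nn r Yu := by
    unfold memIw IsBlockUnipotent IsBlockUpper
    rw [hYu]
    constructor
    · intro k l hlt
      show PadicInt.toZModPow r (Yz k l) = 0
      by_cases hk : (k : ℕ) < (Dsum nn ((j : ℕ) + 1)) <;> by_cases hl : (l : ℕ) < (Dsum nn ((j : ℕ) + 1))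
      · rw [hYz_a k l hk hl, hZzr k l hl]
        exact hXtri k l hlt
      · exfalso
        have h1 := (hblkle k).mp hk
        have h2 := (hblkge l).mp (not_lt.mp hl)
        omega
      · rw [hYz_b k l (not_lt.mp hk) hl, _root_.map_mul, hXtri k l hlt, zero_mul]
      · rw [hYz_c k l (not_lt.mp hk) (not_lt.mp hl)]
        exact hXtri k l hlt
    · intro k l heqb
      show PadicInt.toZModPow r (Yz k l) = (if k = l then 1 else 0)
      by_cases hk : (k : ℕ) < (Dsum nn ((j : ℕ) + 1)) <;> by_cases hl : (l : ℕ) < (Dsum nn ((j : ℕ) + 1))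
      · rw [hYz_a k l hk hl, hZzr k l hl]
        exact hXdiag k l heqb
      · exfalso
        have h1 := (hblkle k).mp hk
        have h2 := (hblkge l).mp (not_lt.mp hl)
        omega
      · exfalso
        have h1 := (hblkle l).mp hl
        have h2 := (hblkge k).mp (not_lt.mp hk)
        omega
      · rw [hYz_c k l (not_lt.mp hk) (not_lt.mp hl)]
        exact hXdiag k l heqb
  -- the decomposition equation
  have heq : Xq = U * (T * toQ p Yu.val * T') := by
    rw [hYu, htoQYz, hYqdef]
    rw [← mul_assoc T (T' * Wq), ← mul_assoc T T', hTT', one_mul, mul_assoc Wq T T',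
      hTT', mul_one, ← mul_assoc U, hUinv, one_mul]
  -- assemble
  refine ⟨⟨B', Yu⟩, ⟨hB'lt, hYumem, heq⟩, ?_⟩
  rintro ⟨B₁, Y₁⟩ ⟨h1lt, h1mem, h1eq⟩
  set A : Matrix (Fin (Dsum nn t)) (Fin (Dsum nn t)) ℚ_[p] := toQ p Y₁.val with hAdef
  -- bottom-right block of Y₁ agrees with X
  have hbr : ∀ m l : Fin (Dsum nn t), (Dsum nn ((j : ℕ) + 1)) ≤ (m : ℕ) → (Dsum nn ((j : ℕ) + 1)) ≤ (l : ℕ) → Y₁.val m l = X.val m l := by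
    intro m l hm hl
    have hent := congrFun (congrFun h1eq m) l
    rw [mul_entry p (Dsum nn t) (Dsum nn ((j : ℕ) + 1)) B₁ A m l, if_neg (by omega), if_neg (by omega), one_mul,
      mul_one] at hent
    have hzero : ∑ m', eMat p (Dsum nn t) (Dsum nn ((j : ℕ) + 1)) B₁ m m' * A m' l = 0 := by
      apply Finset.sum_eq_zero
      intro m' _
      rw [eMat_apply_ne p (Dsum nn t) (Dsum nn ((j : ℕ) + 1)) B₁ (by omega), zero_mul]
    rw [hzero, add_zero] at hent
    exact (Subtype.ext hent).symm
  -- the key equation for the top-right block of Y₁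
  have hkey1 : ∀ k l : Fin (Dsum nn t), (k : ℕ) < (Dsum nn ((j : ℕ) + 1)) → (Dsum nn ((j : ℕ) + 1)) ≤ (l : ℕ) →
      X.val k l = (p : ℤ_[p]) * Y₁.val k l + ∑ m, eZMat p (Dsum nn t) (Dsum nn ((j : ℕ) + 1)) B₁ k m * X.val m l := by
    intro k l hk hl
    have hent := congrFun (congrFun h1eq k) l
    rw [mul_entry p (Dsum nn t) (Dsum nn ((j : ℕ) + 1)) B₁ A k l, if_pos hk, if_neg (by omega), mul_one] at hent
    have hsum : ∀ m : Fin (Dsum nn t), eMat p (Dsum nn t) (Dsum nn ((j : ℕ) + 1)) B₁ k m * A m l =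
        ((eZMat p (Dsum nn t) (Dsum nn ((j : ℕ) + 1)) B₁ k m * X.val m l : ℤ_[p]) : ℚ_[p]) := by
      intro m
      by_cases hm : (k : ℕ) < (Dsum nn ((j : ℕ) + 1)) ∧ (Dsum nn ((j : ℕ) + 1)) ≤ (m : ℕ)
      · rw [eMat_eq_coe, PadicInt.coe_mul]
        congr 1
        rw [hAdef]
        show ((Y₁.val m l : ℤ_[p]) : ℚ_[p]) = _
        rw [hbr m l hm.2 hl]
      · rw [eMat_apply_ne p (Dsum nn t) (Dsum nn ((j : ℕ) + 1)) B₁ hm, eZMat_apply_ne p (Dsum nn t) (Dsum nn ((j : ℕ) + 1)) B₁ hm, zero_mul, zero_mul,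
          PadicInt.coe_zero]
    rw [Finset.sum_congr rfl fun m _ => hsum m] at hent
    apply Subtype.ext
    rw [PadicInt.coe_add, PadicInt.coe_mul, PadicInt.coe_natCast]
    rw [padic_coe_sum p fun m => eZMat p (Dsum nn t) (Dsum nn ((j : ℕ) + 1)) B₁ k m * X.val m l]
    exact hent
  -- reduce mod p : the rows of B₁ satisfy the same linear system as B0
  have hvec : ∀ (v w : {m : Fin (Dsum nn t) // (Dsum nn ((j : ℕ) + 1)) ≤ (m : ℕ)} → ZMod (p ^ 1)),
      Matrix.vecMul v N = Matrix.vecMul w N → v = w := by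
    intro v w h
    have h2 := congrArg (fun u => Matrix.vecMul u N⁻¹) h
    simpa [Matrix.vecMul_vecMul, Matrix.mul_nonsing_inv N hNunit, Matrix.vecMul_one] using h2
  have hrow : ∀ (k : Fin (Dsum nn t)), (k : ℕ) < (Dsum nn ((j : ℕ) + 1)) →
      (fun b : {m : Fin (Dsum nn t) // (Dsum nn ((j : ℕ) + 1)) ≤ (m : ℕ)} => PadicInt.toZModPow 1 (eZMat p (Dsum nn t) (Dsum nn ((j : ℕ) + 1)) B₁ k b.1))
        = B0 k := by
    intro k hk
    apply hvec
    rw [hB0 k]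
    funext b
    show ∑ a : {m : Fin (Dsum nn t) // (Dsum nn ((j : ℕ) + 1)) ≤ (m : ℕ)},
      PadicInt.toZModPow 1 (eZMat p (Dsum nn t) (Dsum nn ((j : ℕ) + 1)) B₁ k a.1) * N a b = M1 k b.1
    have hp1 : ((p : ℕ) : ZMod (p ^ 1)) = 0 := by
      rw [pow_one]
      exact ZMod.natCast_self p
    have h2 := congrArg (PadicInt.toZModPow 1) (hkey1 k b.1 hk b.2)
    rw [_root_.map_add, _root_.map_mul, _root_.map_natCast, hp1, zero_mul, zero_add, _root_.map_sum] at h2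
    have hterm : ∀ m : Fin (Dsum nn t), PadicInt.toZModPow 1 (eZMat p (Dsum nn t) (Dsum nn ((j : ℕ) + 1)) B₁ k m * X.val m b.1) =
        (fun m : Fin (Dsum nn t) => PadicInt.toZModPow 1 (eZMat p (Dsum nn t) (Dsum nn ((j : ℕ) + 1)) B₁ k m) * M1 m b.1) m :=
      fun m => _root_.map_mul _ _ _
    rw [Finset.sum_congr rfl fun m _ => hterm m] at h2
    rw [hsubty (fun m => PadicInt.toZModPow 1 (eZMat p (Dsum nn t) (Dsum nn ((j : ℕ) + 1)) B₁ k m) * M1 m b.1)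
      (fun m hm => by
        show PadicInt.toZModPow 1 (eZMat p (Dsum nn t) (Dsum nn ((j : ℕ) + 1)) B₁ k m) * M1 m b.1 = 0
        rw [eZMat_apply_ne p (Dsum nn t) (Dsum nn ((j : ℕ) + 1)) B₁ (by omega), _root_.map_zero, zero_mul])] at h2
    exact h2.symm
  -- conclude B₁ = B'
  have hBeq : B₁ = B' := by
    funext a b
    have hk : ((⟨(a : ℕ), lt_of_lt_of_le a.2 hii⟩ : Fin (Dsum nn t)) : ℕ) < (Dsum nn ((j : ℕ) + 1)) := a.2
    have hbS : (Dsum nn ((j : ℕ) + 1)) ≤ ((⟨(Dsum nn ((j : ℕ) + 1)) + (b : ℕ), by omega⟩ : Fin (Dsum nn t)) : ℕ) := by simp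
    have hcf := congrFun (hrow ⟨(a : ℕ), lt_of_lt_of_le a.2 hii⟩ hk)
      ⟨⟨(Dsum nn ((j : ℕ) + 1)) + (b : ℕ), by omega⟩, hbS⟩
    have hlhs : PadicInt.toZModPow 1
        (eZMat p (Dsum nn t) (Dsum nn ((j : ℕ) + 1)) B₁ ⟨(a : ℕ), lt_of_lt_of_le a.2 hii⟩ ⟨(Dsum nn ((j : ℕ) + 1)) + (b : ℕ), by omega⟩) =
        ((B₁ a b : ℕ) : ZMod (p ^ 1)) := by
      unfold eZMat
      rw [dif_pos ⟨hk, hbS⟩, _root_.map_natCast]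
      congr 2
      all_goals apply Fin.ext
      all_goals simp
      all_goals omega
    have hrhs : B0 (⟨(a : ℕ), lt_of_lt_of_le a.2 hii⟩ : Fin (Dsum nn t))
        ⟨⟨(Dsum nn ((j : ℕ) + 1)) + (b : ℕ), by omega⟩, hbS⟩ = ((B' a b : ℕ) : ZMod (p ^ 1)) := by
      rw [← hB'cast ⟨(a : ℕ), lt_of_lt_of_le a.2 hii⟩ hk ⟨⟨(Dsum nn ((j : ℕ) + 1)) + (b : ℕ), by omega⟩, hbS⟩]
      congr 2
      all_goals apply Fin.ext
      all_goals simp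
      all_goals omega
    rw [hlhs, hrhs] at hcf
    have hv := congrArg ZMod.val hcf
    rwa [ZMod.val_cast_of_lt (by rw [pow_one]; exact h1lt a b),
      ZMod.val_cast_of_lt (by rw [pow_one]; exact hB'lt a b)] at hv
  -- conclude Y₁ = Yu
  have hred : ∀ Z : Matrix (Fin (Dsum nn t)) (Fin (Dsum nn t)) ℚ_[p],
      T' * (T * Z * T') * T = Z := by
    intro Z
    rw [← mul_assoc T' (T * Z) T', ← mul_assoc T' T Z, hT'T, one_mul, mul_assoc Z T' T,
      hT'T, mul_one]
  have hY1 : Y₁ = Yu := by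
    rw [hBeq, ← hUdef] at h1eq
    have hUW := h1eq.symm.trans heq
    have h3 := congrArg (fun M => (1 - Em) * M) hUW
    rw [← mul_assoc (1 - Em) U (T * A * T'), hUinv', one_mul,
      ← mul_assoc (1 - Em) U (T * toQ p Yu.val * T'), hUinv', one_mul] at h3
    have h4 := congrArg (fun M => T' * M * T) h3
    rw [hred A, hred (toQ p Yu.val)] at h4
    apply Units.ext
    funext k l
    exact Subtype.ext (congrFun (congrFun h4 k) l)
  exact Prod.ext hBeq hY1


end PIw
end
end

section
/- For every r ≥ 1, the intersection of the set P(ℚ_p)·I_r with GL_n(ℤ_p) equals I_r^0; that is, an element of GL_n(ℤ_p) can be written as a product p·h with p ∈ P(ℚ_p) block upper triangular invertible and h ∈ I_r if and only if it lies in the P-Iwahori subgroup I_r^0. -/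
/-!
STATEMENT 8: For every r ≥ 1, the intersection of the set P(ℚ_p)·I_r with GL_n(ℤ_p)
equals I_r^0; that is, an element of GL_n(ℤ_p) can be written as a product q·h with
q ∈ P(ℚ_p) block upper triangular invertible and h ∈ I_r if and only if it lies in the
P-Iwahori subgroup I_r^0.
-/

open Matrix

noncomputable section
namespace PIw

variable (p : ℕ) [Fact p.Prime]

set_option linter.unusedVariables false in
lemma redMat_mul (r : ℕ) {N : ℕ} (A B : Matrix (Fin N) (Fin N) ℤ_[p]) :
    redMat p r (A * B) = redMat p r A * redMat p r B := by
  simp [redMat, Matrix.map_mul]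

lemma toQ_mul {N : ℕ} (A B : Matrix (Fin N) (Fin N) ℤ_[p]) :
    toQ p (A * B) = toQ p A * toQ p B := by
  have : toQ p (A * B) = (PadicInt.Coe.ringHom (p := p)).mapMatrix (A * B) := rfl
  rw [this, _root_.map_mul]; rfl

/-- `P(ℚ_p)·I_r ∩ GL_n(ℤ_p) = I_r^0`. -/
theorem parabolic_mul_iw_inter_integral {t : ℕ} (nn : Fin t → ℕ) (hpos : ∀ j, 0 < nn j)
    (r : ℕ) (hr : 1 ≤ r) (g : GL (Fin (Dsum nn t)) ℤ_[p]) :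
    (∃ (q : GL (Fin (Dsum nn t)) ℚ_[p]) (h : GL (Fin (Dsum nn t)) ℤ_[p]),
        IsBlockUpper nn q.val ∧ memIw p nn r h ∧ toQ p g.val = q.val * toQ p h.val) ↔
      memIw0 p nn r g := by
  constructor
  · rintro ⟨q, h, hq, hh, heq⟩
    -- u = g * h⁻¹ is integral and maps to q over ℚ_p
    set u : GL (Fin (Dsum nn t)) ℤ_[p] := g * h⁻¹ with hu
    have huh : u.val * h.val = g.val := by
      rw [← Units.val_mul, hu, inv_mul_cancel_right]
    have huq : toQ p u.val = q.val := by
      have h1 : toQ p u.val * toQ p h.val = toQ p g.val := by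
        rw [← toQ_mul, huh]
      have h4 : toQ p h.val * toQ p (h⁻¹).val = 1 := by
        rw [← toQ_mul, ← Units.val_mul, mul_inv_cancel]
        simp [toQ]
        exact Matrix.map_one _ (by simp) (by simp)
      have h2 : toQ p u.val * toQ p h.val = q.val * toQ p h.val := by rw [h1, heq]
      calc toQ p u.val = toQ p u.val * (toQ p h.val * toQ p (h⁻¹).val) := by rw [h4, mul_one]
        _ = (toQ p u.val * toQ p h.val) * toQ p (h⁻¹).val := by rw [mul_assoc]
        _ = (q.val * toQ p h.val) * toQ p (h⁻¹).val := by rw [h2]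
        _ = q.val * (toQ p h.val * toQ p (h⁻¹).val) := by rw [mul_assoc]
        _ = q.val := by rw [h4, mul_one]
    -- u.val is block triangular over ℤ_p
    have hub : (u.val).BlockTriangular (bfun nn) := by
      intro i j hij
      have hc : ((u.val i j : ℤ_[p]) : ℚ_[p]) = 0 := by
        have h5 : toQ p u.val i j = q.val i j := by rw [huq]
        simpa [toQ, Matrix.map_apply] using h5.trans (hq hij)
      exact PadicInt.coe_eq_zero.mp hc
    unfold memIw0 IsBlockUpper
    rw [← huh, redMat_mul]
    exact Matrix.BlockTriangular.mul (fun i j hij => by simp [redMat, Matrix.map_apply, hub hij])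
      hh.1
  · intro hg
    -- Construct the block-upper lift Q of g over ℤ_p
    set Q : Matrix (Fin (Dsum nn t)) (Fin (Dsum nn t)) ℤ_[p] :=
      fun i j => if bfun nn j < bfun nn i then 0 else g.val i j with hQ
    have hred : redMat p r Q = redMat p r g.val := by
      ext i j
      show (PadicInt.toZModPow r) (Q i j) = (PadicInt.toZModPow r) (g.val i j)
      by_cases hij : bfun nn j < bfun nn i
      · rw [show Q i j = 0 from if_pos hij, map_zero]
        exact (hg hij).symm
      · rw [show Q i j = g.val i j from if_neg hij]
    -- Q is invertible
    have hdet : IsUnit Q.det := by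
      by_contra hcon
      have hmem : Q.det ∈ IsLocalRing.maximalIdeal ℤ_[p] := hcon
      have hker : Q.det - g.val.det ∈ RingHom.ker (PadicInt.toZModPow (p := p) r) := by
        rw [RingHom.mem_ker, map_sub]
        have h6 : (redMat p r Q).det = (redMat p r g.val).det := by rw [hred]
        simp only [redMat] at h6
        rw [← RingHom.mapMatrix_apply, ← RingHom.mapMatrix_apply] at h6
        rw [show (PadicInt.toZModPow (p := p) r) Q.det = ((PadicInt.toZModPow (p := p) r).mapMatrix Q).det from (RingHom.map_det _ _),
          show (PadicInt.toZModPow (p := p) r) g.val.det = ((PadicInt.toZModPow (p := p) r).mapMatrix g.val).det from (RingHom.map_det _ _), h6, sub_self]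
      have hmem2 : Q.det - g.val.det ∈ IsLocalRing.maximalIdeal ℤ_[p] := by
        rw [PadicInt.ker_toZModPow] at hker
        rw [PadicInt.maximalIdeal_eq_span_p]
        rw [Ideal.mem_span_singleton] at hker ⊢
        exact dvd_trans (dvd_pow_self _ (by omega)) hker
      have hgm : g.val.det ∈ IsLocalRing.maximalIdeal ℤ_[p] := by
        simpa using Ideal.sub_mem _ hmem hmem2
      have hgu : IsUnit g.val.det := (Matrix.isUnit_iff_isUnit_det _).mp g.isUnit
      exact (IsLocalRing.mem_maximalIdeal _).mp hgm hgu
    have hQu : IsUnit Q := (Matrix.isUnit_iff_isUnit_det _).mpr hdet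
    set qZ : GL (Fin (Dsum nn t)) ℤ_[p] := hQu.unit with hqZ
    have hqZval : qZ.val = Q := rfl
    refine ⟨Units.map (PadicInt.Coe.ringHom (p := p)).mapMatrix.toMonoidHom qZ, qZ⁻¹ * g,
      ?_, ?_, ?_⟩
    · intro i j hij
      show toQ p Q i j = 0
      simp only [toQ, Matrix.map_apply]
      rw [show Q i j = 0 from if_pos hij]
      simp
    · have h1 : redMat p r ((qZ⁻¹ * g).val) = 1 := by
        rw [show (qZ⁻¹ * g).val = (qZ⁻¹).val * g.val from rfl, redMat_mul, ← hred, ← hqZval,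
          ← redMat_mul, ← Units.val_mul, inv_mul_cancel]
        simp [redMat]
      unfold memIw IsBlockUnipotent IsBlockUpper
      rw [h1]
      exact ⟨Matrix.blockTriangular_one, fun k l _ => Matrix.one_apply⟩
    · show toQ p g.val = toQ p qZ.val * toQ p (qZ⁻¹ * g).val
      rw [← toQ_mul, ← Units.val_mul, mul_inv_cancel_left]

end PIw
end
end
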